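/- Let a > 0, θ ∈ (0, π/2) and θ₀ ∈ [θ, π/2). Then for every w ∈ ℂ with w ≠ 0 and θ − θ₀ ≤ Arg(w) ≤ θ₀, and for every s ∈ ℝ, one has |R(w, τ_θ(s) − a)|² ≥ cos(θ₀) · (|w|² + |τ_θ(s) − a|²), where R(ŵ,ζ) := (ŵ² + ζ²)^{1/2}. -/

import Mathlib

open Complex Real

/-- The complex path `τ_θ` associated with the square `(-a,a)²`. -/
noncomputable def tauPath (a θ s : ℝ) : ℂ :=
  if s < -a then -(a : ℂ) + ((s + a : ℝ) : ℂ) * Complex.exp (θ * Complex.I)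
  else if s ≤ a then (s : ℂ)
  else (a : ℂ) + ((s - a : ℝ) : ℂ) * Complex.exp (θ * Complex.I)

/-- The principal square root `R(ŵ,ζ) := (ŵ² + ζ²)^{1/2}`. -/
noncomputable def Rc (w ζ : ℂ) : ℂ := (w ^ 2 + ζ ^ 2) ^ ((1 : ℂ) / 2)

lemma absSq_half (z : ℂ) : ‖z ^ ((1 : ℂ) / 2)‖ ^ 2 = ‖z‖ := by
  have h : ((1 : ℂ)/2) = (((1:ℝ)/2 : ℝ) : ℂ) := by push_cast; ring
  rw [h, Complex.norm_cpow_real]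
  rw [← Real.rpow_natCast (‖z‖ ^ ((1:ℝ)/2)) 2, ← Real.rpow_mul (norm_nonneg z)]
  norm_num

lemma sq_eq (v : ℂ) : v ^ 2 = ((‖v‖ ^ 2 : ℝ) : ℂ)
    * Complex.exp (((2 * v.arg : ℝ) : ℂ) * Complex.I) := by
  conv_lhs => rw [← Complex.norm_mul_exp_arg_mul_I v]
  rw [mul_pow, ← Complex.exp_nat_mul]
  push_cast; ring_nf

lemma cos_bound {t x : ℝ} (h0 : t < π / 2) (hx : |x| ≤ t) : Real.cos t ≤ Real.cos x := by
  rw [← Real.cos_abs x]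
  exact Real.cos_le_cos_of_nonneg_of_le_pi (abs_nonneg _) (by linarith [Real.pi_pos]) hx

lemma key_ineq (θ₀ A B : ℝ) (h0 : 0 ≤ θ₀) (hπ : θ₀ < π / 2)
    (r₁ r₂ : ℝ) (hr₁ : 0 ≤ r₁) (hr₂ : 0 ≤ r₂) (hAB : |A - B| ≤ 2 * θ₀) :
    Real.cos θ₀ * (r₁ + r₂) ≤
      ‖(r₁ : ℂ) * Complex.exp ((A : ℂ) * Complex.I)
        + (r₂ : ℂ) * Complex.exp ((B : ℂ) * Complex.I)‖ := by
  set φ : ℝ := (A + B) / 2 with hφ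
  set z : ℂ := (r₁ : ℂ) * Complex.exp ((A : ℂ) * Complex.I)
      + (r₂ : ℂ) * Complex.exp ((B : ℂ) * Complex.I) with hz
  have habs : ‖z‖ = ‖Complex.exp ((-φ : ℝ) * Complex.I) * z‖ := by
    rw [norm_mul, Complex.norm_exp_ofReal_mul_I, one_mul]
  have hre : (Complex.exp ((-φ : ℝ) * Complex.I) * z).re
      = r₁ * Real.cos (A - φ) + r₂ * Real.cos (B - φ) := by
    have e1 : Complex.exp ((-φ : ℝ) * Complex.I) * ((r₁ : ℂ) * Complex.exp ((A : ℂ) * Complex.I))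
        = (r₁ : ℂ) * Complex.exp (((A - φ : ℝ) : ℂ) * Complex.I) := by
      rw [mul_left_comm, ← Complex.exp_add]; push_cast; ring_nf
    have e2 : Complex.exp ((-φ : ℝ) * Complex.I) * ((r₂ : ℂ) * Complex.exp ((B : ℂ) * Complex.I))
        = (r₂ : ℂ) * Complex.exp (((B - φ : ℝ) : ℂ) * Complex.I) := by
      rw [mul_left_comm, ← Complex.exp_add]; push_cast; ring_nf
    rw [hz, mul_add, e1, e2, Complex.add_re, Complex.mul_re, Complex.mul_re]
    simp only [Complex.ofReal_re, Complex.ofReal_im, Complex.exp_ofReal_mul_I_re,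
      zero_mul, sub_zero]
  have hhalf : |(A - B) / 2| ≤ θ₀ := by rw [abs_div, show |(2:ℝ)| = 2 by norm_num]; linarith [hAB]
  have hcos1 : Real.cos θ₀ ≤ Real.cos (A - φ) := by
    have hAφ : A - φ = (A - B) / 2 := by rw [hφ]; ring
    rw [hAφ]; exact cos_bound hπ hhalf
  have hcos2 : Real.cos θ₀ ≤ Real.cos (B - φ) := by
    have hBφ : B - φ = -((A - B) / 2) := by rw [hφ]; ring
    rw [hBφ, Real.cos_neg]; exact cos_bound hπ hhalf
  calc Real.cos θ₀ * (r₁ + r₂) = Real.cos θ₀ * r₁ + Real.cos θ₀ * r₂ := by ring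
    _ ≤ r₁ * Real.cos (A - φ) + r₂ * Real.cos (B - φ) :=
        add_le_add (by rw [mul_comm]; exact mul_le_mul_of_nonneg_left hcos1 hr₁)
          (by rw [mul_comm]; exact mul_le_mul_of_nonneg_left hcos2 hr₂)
    _ = (Complex.exp ((-φ : ℝ) * Complex.I) * z).re := hre.symm
    _ ≤ ‖Complex.exp ((-φ : ℝ) * Complex.I) * z‖ := Complex.re_le_norm _
    _ = ‖z‖ := habs.symm

/-- Let `a > 0`, `θ ∈ (0, π/2)`, `θ₀ ∈ [θ, π/2)`. Then for every `w ≠ 0` with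
`θ − θ₀ ≤ Arg w ≤ θ₀` and every `s ∈ ℝ`,
`|R(w, τ_θ(s) − a)|² ≥ cos θ₀ · (|w|² + |τ_θ(s) − a|²)`. -/
theorem stmt_6 (a θ θ₀ : ℝ) (ha : 0 < a) (hθ₀' : 0 < θ) (hθ₁ : θ < π / 2)
    (hθθ₀ : θ ≤ θ₀) (hθ₀ : θ₀ < π / 2)
    (w : ℂ) (hw : w ≠ 0) (harg₁ : θ - θ₀ ≤ w.arg) (harg₂ : w.arg ≤ θ₀) (s : ℝ) :
    Real.cos θ₀ * (‖w‖ ^ 2 + ‖tauPath a θ s - (a : ℂ)‖ ^ 2) ≤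
      ‖Rc w (tauPath a θ s - (a : ℂ))‖ ^ 2 := by
  set ζ : ℂ := tauPath a θ s - (a : ℂ) with hζ
  -- factor w^2
  have hw2 := sq_eq w
  -- find B for ζ^2
  have hB : ∃ B : ℝ, 0 ≤ B ∧ B ≤ 2 * θ ∧
      ζ ^ 2 = ((‖ζ‖ ^ 2 : ℝ) : ℂ) * Complex.exp ((B : ℂ) * Complex.I) := by
    rw [hζ]; unfold tauPath
    split_ifs with h1 h2
    · -- s < -a
      set t : ℝ := -(s + a) with ht
      have htpos : 0 < t := by simp [ht]; linarith
      have hcosθ : 0 < Real.cos θ := Real.cos_pos_of_mem_Ioo ⟨by linarith, hθ₁⟩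
      have hsinθ : 0 < Real.sin θ := Real.sin_pos_of_pos_of_lt_pi hθ₀' (by linarith [Real.pi_pos])
      set u : ℂ := ((2 * a : ℝ) : ℂ) + (t : ℂ) * Complex.exp ((θ : ℝ) * Complex.I) with hu
      have hure : u.re = 2 * a + t * Real.cos θ := by
        simp [hu, Complex.add_re, Complex.mul_re, Complex.exp_ofReal_mul_I_re,
          Complex.exp_ofReal_mul_I_im]
      have huim : u.im = t * Real.sin θ := by
        simp [hu, Complex.add_im, Complex.mul_im, Complex.exp_ofReal_mul_I_re,
          Complex.exp_ofReal_mul_I_im]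
      have hurepos : 0 < u.re := by rw [hure]; nlinarith
      have huimpos : 0 < u.im := by rw [huim]; nlinarith
      have hargnn : 0 ≤ u.arg := Complex.arg_nonneg_iff.2 huimpos.le
      have harglt : u.arg < π / 2 := Complex.arg_lt_pi_div_two_iff.2 (Or.inl hurepos)
      have hargle : u.arg ≤ θ := by
        by_contra hc
        push_neg at hc
        have htan : Real.tan θ < Real.tan u.arg :=
          Real.tan_lt_tan_of_nonneg_of_lt_pi_div_two hθ₀'.le harglt hc
        rw [Real.tan_eq_sin_div_cos, Complex.tan_arg, hure, huim] at htan
        rw [div_lt_div_iff₀ hcosθ (by nlinarith : (0:ℝ) < 2 * a + t * Real.cos θ)] at htan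
        nlinarith
      refine ⟨2 * u.arg, by linarith, by linarith, ?_⟩
      have hzu : -(a : ℂ) + ((s + a : ℝ) : ℂ) * Complex.exp ((θ:ℝ) * Complex.I) - (a : ℂ) = -u := by
        rw [hu]; push_cast [ht]; ring
      rw [hzu, neg_sq, norm_neg]
      exact sq_eq u
    · -- -a ≤ s ≤ a
      refine ⟨0, le_refl _, by linarith, ?_⟩
      have h3 : (s : ℂ) - (a : ℂ) = ((s - a : ℝ) : ℂ) := by push_cast; ring
      rw [h3, Complex.ofReal_zero, zero_mul, Complex.exp_zero, mul_one, Complex.norm_real, Real.norm_eq_abs]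
      norm_cast
      exact (_root_.sq_abs _).symm
    · -- s > a
      refine ⟨2 * θ, by linarith, le_refl _, ?_⟩
      have : (a : ℂ) + ((s - a : ℝ) : ℂ) * Complex.exp ((θ:ℝ) * Complex.I) - (a : ℂ)
          = ((s - a : ℝ) : ℂ) * Complex.exp ((θ:ℝ) * Complex.I) := by ring
      rw [this, mul_pow, ← Complex.exp_nat_mul, norm_mul, Complex.norm_exp_ofReal_mul_I,
        Complex.norm_real, Real.norm_eq_abs, mul_one, ← Complex.ofReal_pow, _root_.sq_abs,
        Complex.ofReal_pow]
      push_cast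
      ring_nf
  obtain ⟨B, hB0, hB2θ, hBeq⟩ := hB
  have habsRc : ‖Rc w ζ‖ ^ 2 = ‖w ^ 2 + ζ ^ 2‖ := by
    rw [Rc]; exact absSq_half _
  rw [habsRc, hw2, hBeq]
  have hABle : |2 * w.arg - B| ≤ 2 * θ₀ := by
    rw [abs_le]; constructor <;> nlinarith
  exact key_ineq θ₀ (2 * w.arg) B (by linarith) hθ₀ _ _ (sq_nonneg _) (sq_nonneg _) hABle
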